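/- For τ in the upper half-plane and z ∈ ℂ with ϑ₁₀(2τ,z), ϑ₀₀(2τ,z), ϑ₁₀(τ,z) all nonzero, one has ϑ₀₀(2τ,z)/ϑ₁₀(2τ,z) − ϑ₁₀(2τ,z)/ϑ₀₀(2τ,z) = (η(τ/2)² / η(2τ)²) · ϑ₀₁(τ,z)/ϑ₁₀(τ,z). -/

import Mathlib

open Real Complex Filter Topology

noncomputable section

noncomputable def theta00 (τ z : ℂ) : ℂ :=
  ∑' n : ℤ, Complex.exp (2*(π:ℂ)*Complex.I*(n:ℂ)*z) *
    Complex.exp (2*(π:ℂ)*Complex.I*τ*((n:ℂ)^2/2))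

noncomputable def theta01 (τ z : ℂ) : ℂ :=
  ∑' n : ℤ, (-1:ℂ)^n * Complex.exp (2*(π:ℂ)*Complex.I*(n:ℂ)*z) *
    Complex.exp (2*(π:ℂ)*Complex.I*τ*((n:ℂ)^2/2))

noncomputable def theta10 (τ z : ℂ) : ℂ :=
  ∑' n : ℤ, Complex.exp (2*(π:ℂ)*Complex.I*((n:ℂ)+1/2)*z) *
    Complex.exp (2*(π:ℂ)*Complex.I*τ*((1/2)*((n:ℂ)+1/2)^2))

noncomputable def theta11 (τ z : ℂ) : ℂ :=
  Complex.I * ∑' n : ℤ, (-1:ℂ)^n * Complex.exp (2*(π:ℂ)*Complex.I*((n:ℂ)+1/2)*z) *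
    Complex.exp (2*(π:ℂ)*Complex.I*τ*((1/2)*((n:ℂ)+1/2)^2))

noncomputable def dedekindEta (τ : ℂ) : ℂ :=
  Complex.exp ((π:ℂ)*Complex.I*τ/12) *
    ∏' n : ℕ, (1 - Complex.exp (2*(π:ℂ)*Complex.I*τ*((n:ℂ)+1)))

namespace TP

lemma expzpow (a : ℂ) (k : ℤ) : Complex.exp a ^ k = Complex.exp (k * a) :=
  (Complex.exp_int_mul a k).symm

lemma norm_exp_lt_one {a : ℂ} (ha : a.re < 0) : ‖Complex.exp a‖ < 1 := by
  rw [Complex.norm_exp]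
  exact Real.exp_lt_one_iff.mpr ha

-- geometric norm summability
lemma H1 {s : ℂ} (hs : ‖s‖ < 1) (a b : ℕ) (ha : 0 < a) :
    Summable (fun n : ℕ => ‖s ^ (a * n + b)‖) := by
  have h0 : (0:ℝ) ≤ ‖s‖ := norm_nonneg _
  have : (fun n : ℕ => ‖s ^ (a * n + b)‖) = fun n : ℕ => ‖s‖ ^ b * (‖s‖ ^ a) ^ n := by
    funext n
    rw [norm_pow, pow_add, pow_mul, mul_comm]
  rw [this]
  exact (summable_geometric_of_lt_one (pow_nonneg h0 a)
    (pow_lt_one₀ h0 hs ha.ne')).mul_left _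

lemma H2 {u : ℕ → ℂ} (hu : Summable fun n => ‖u n‖) :
    Summable (fun n => ‖Complex.log (1 + u n)‖) := by
  have h0 : Tendsto (fun n => ‖u n‖) atTop (𝓝 0) := hu.tendsto_atTop_zero
  apply Summable.of_norm_bounded_eventually (g := fun n => 3/2 * ‖u n‖) (hu.mul_left _)
  rw [Nat.cofinite_eq_atTop]
  have hev : ∀ᶠ n in atTop, ‖u n‖ ≤ 1/2 := by
    have := h0.eventually (eventually_le_nhds (by norm_num : (0:ℝ) < 1/2))
    simpa using this
  filter_upwards [hev] with n hn
  rw [norm_norm]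
  exact Complex.norm_log_one_add_half_le_self hn

lemma H2' {u : ℕ → ℂ} (hu : Summable fun n => ‖u n‖) :
    Summable (fun n => Complex.log (1 + u n)) :=
  (H2 hu).of_norm

lemma H3 {f : ℕ → ℂ} (hf : Summable fun n => ‖f n‖) (k : ℕ) :
    ‖∑ i ∈ Finset.range k, f i‖ ≤ ∑' n, ‖f n‖ :=
  le_trans (norm_sum_le _ _) (Summable.sum_le_tsum _ (fun i _ => norm_nonneg _) hf)

-- nat-side gaussian summability
lemma ZSnat {x q : ℂ} (hq : ‖q‖ < 1) :
    Summable (fun n : ℕ => ‖x‖ ^ n * ‖q‖ ^ (n^2)) := by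
  have h0 : (0:ℝ) ≤ ‖q‖ := norm_nonneg _
  have hq0 : Tendsto (fun n : ℕ => ‖x‖ * ‖q‖ ^ n) atTop (𝓝 (‖x‖ * 0)) :=
    (tendsto_pow_atTop_nhds_zero_of_lt_one h0 hq).const_mul _
  rw [mul_zero] at hq0
  have hev : ∀ᶠ n : ℕ in atTop, ‖x‖ * ‖q‖ ^ n ≤ 1/2 := by
    have := hq0.eventually (eventually_le_nhds (by norm_num : (0:ℝ) < 1/2))
    simpa using this
  apply Summable.of_norm_bounded_eventually (g := fun n : ℕ => (1/2) ^ n)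
    (summable_geometric_of_lt_one (by norm_num) (by norm_num))
  rw [Nat.cofinite_eq_atTop]
  filter_upwards [hev] with n hn
  have h1 : ‖x‖ ^ n * ‖q‖ ^ (n^2) = (‖x‖ * ‖q‖ ^ n) ^ n := by
    rw [mul_pow, ← pow_mul, sq]
  rw [Real.norm_eq_abs, _root_.abs_of_nonneg (by positivity), h1]
  exact pow_le_pow_left₀ (by positivity) hn n

lemma ZS {x q : ℂ} (hq : ‖q‖ < 1) (hq0 : q ≠ 0) (hx : x ≠ 0) :
    Summable (fun n : ℤ => ‖x ^ n * q ^ (n^2)‖) := by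
  apply Summable.of_nat_of_neg
  · apply Summable.congr (ZSnat (x := x) hq)
    intro n
    have h1 : ((n:ℤ))^2 = ((n^2:ℕ):ℤ) := by push_cast; ring
    rw [h1, zpow_natCast, zpow_natCast, norm_mul, norm_pow, norm_pow]
  · apply Summable.congr (ZSnat (x := x⁻¹) hq)
    intro n
    have h1 : ((-(n:ℤ)))^2 = ((n^2:ℕ):ℤ) := by push_cast; ring
    rw [h1, zpow_natCast, zpow_neg, zpow_natCast]
    simp [norm_mul, inv_pow]

lemma ZS' (C : ℂ) {X q : ℂ} (hq : ‖q‖ < 1) (hq0 : q ≠ 0) (hX : X ≠ 0) :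
    Summable (fun n : ℤ => ‖C * (X ^ n * q ^ (n^2))‖) := by
  simpa [norm_mul, mul_assoc] using (ZS hq hq0 hX).mul_left ‖C‖

lemma summable_of_bounded_support (h : ℤ → ℂ) (M : ℕ)
    (hh : ∀ n : ℤ, M < n.natAbs → h n = 0) : Summable h := by
  apply summable_of_ne_finset_zero (s := Finset.Icc (-(M:ℤ)) M)
  intro n hn
  apply hh
  simp only [Finset.mem_Icc] at hn
  omega


def sEven : Set (ℤ × ℤ) := {x | (x.1 + x.2) % 2 = 0}

def eEven : ℤ × ℤ ≃ sEven where
  toFun ab := ⟨(ab.1 + ab.2, ab.1 - ab.2), by simp only [sEven, Set.mem_setOf_eq]; omega⟩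
  invFun x := ((x.1.1 + x.1.2)/2, (x.1.1 - x.1.2)/2)
  left_inv ab := by
    ext <;> simp <;> omega
  right_inv x := by
    obtain ⟨⟨j, k⟩, hx⟩ := x
    have hx' : (j + k) % 2 = 0 := hx
    ext <;> simp <;> omega

def eOdd : ℤ × ℤ ≃ ↥(sEvenᶜ) where
  toFun ab := ⟨(ab.1 + ab.2 + 1, ab.1 - ab.2), by simp only [sEven, Set.mem_compl_iff, Set.mem_setOf_eq]; omega⟩
  invFun x := ((x.1.1 + x.1.2 - 1)/2, (x.1.1 - x.1.2 - 1)/2)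
  left_inv ab := by
    ext <;> simp <;> omega
  right_inv x := by
    obtain ⟨⟨j, k⟩, hx⟩ := x
    have hx' : ¬ ((j + k) % 2 = 0) := hx
    ext <;> simp <;> omega

lemma split_parity (F : ℤ × ℤ → ℂ) (hF : Summable F) :
    ∑' mn : ℤ × ℤ, F mn
      = (∑' ab : ℤ × ℤ, F (ab.1 + ab.2, ab.1 - ab.2))
        + (∑' ab : ℤ × ℤ, F (ab.1 + ab.2 + 1, ab.1 - ab.2)) := by
  rw [← Summable.tsum_add_tsum_compl (s := sEven) (hF.subtype _) (hF.subtype _)]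
  congr 1
  · exact (eEven.tsum_eq (fun x : sEven => F x)).symm
  · exact (eOdd.tsum_eq (fun x : ↥(sEvenᶜ) => F x)).symm


section Prods
variable {α β : ℂ} (hα : α.re < 0)

lemma sgn2 (a b : ℤ) : (-1:ℂ)^(a+b) * (-1:ℂ)^(a-b) = 1 := by
  rw [← zpow_add₀ (by norm_num : (-1:ℂ) ≠ 0)]
  have h : a + b + (a - b) = 2 * a := by ring
  rw [h, zpow_mul]
  norm_num

lemma sgn2odd (a b : ℤ) : (-1:ℂ)^(a+b+1) * (-1:ℂ)^(a-b) = -1 := by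
  rw [← zpow_add₀ (by norm_num : (-1:ℂ) ≠ 0)]
  have h : a + b + 1 + (a - b) = 2 * a + 1 := by ring
  rw [h, zpow_add₀ (by norm_num : (-1:ℂ) ≠ 0), zpow_mul]
  norm_num

include hα

lemma sf00 : Summable (fun n : ℤ => ‖cexp (2*n*β + 8*n^2*α)‖) := by
  apply Summable.congr (ZS' 1 (X := cexp (2*β)) (q := cexp (8*α))
    (norm_exp_lt_one (by simp; linarith)) (Complex.exp_ne_zero _) (Complex.exp_ne_zero _))
  intro n
  rw [one_mul, expzpow, expzpow, ← Complex.exp_add]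
  congr 1
  push_cast
  ring

lemma sf10 : Summable (fun n : ℤ => ‖cexp ((2*n+1)*β + (8*n^2+8*n+2)*α)‖) := by
  apply Summable.congr (ZS' (cexp (β + 2*α)) (X := cexp (2*β+8*α)) (q := cexp (8*α))
    (norm_exp_lt_one (by simp; linarith)) (Complex.exp_ne_zero _) (Complex.exp_ne_zero _))
  intro n
  rw [expzpow, expzpow, ← Complex.exp_add, ← Complex.exp_add]
  congr 1
  push_cast
  ring

lemma sg01 : Summable (fun n : ℤ => ‖(-1:ℂ)^n * cexp (2*n*β + 4*n^2*α)‖) := by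
  apply Summable.congr (ZS' 1 (X := -cexp (2*β)) (q := cexp (4*α))
    (norm_exp_lt_one (by simp; linarith)) (Complex.exp_ne_zero _)
    (neg_ne_zero.mpr (Complex.exp_ne_zero _)))
  intro n
  rw [one_mul, neg_eq_neg_one_mul, mul_zpow, mul_assoc, expzpow, expzpow, ← Complex.exp_add]
  congr 2
  push_cast
  ring

lemma sg10 : Summable (fun n : ℤ => ‖cexp ((2*n+1)*β + (4*n^2+4*n+1)*α)‖) := by
  apply Summable.congr (ZS' (cexp (β + α)) (X := cexp (2*β+4*α)) (q := cexp (4*α))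
    (norm_exp_lt_one (by simp; linarith)) (Complex.exp_ne_zero _) (Complex.exp_ne_zero _))
  intro n
  rw [expzpow, expzpow, ← Complex.exp_add, ← Complex.exp_add]
  congr 1
  push_cast
  ring

lemma st01 : Summable (fun n : ℤ => ‖(-1:ℂ)^n * cexp (4*n^2*α)‖) := by
  apply Summable.congr (ZS' 1 (X := (-1:ℂ)) (q := cexp (4*α))
    (norm_exp_lt_one (by simp; linarith)) (Complex.exp_ne_zero _) (by norm_num))
  intro n
  rw [one_mul, expzpow, show ((n^2:ℤ):ℂ)*(4*α) = 4*(n:ℂ)^2*α by push_cast; ring]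

lemma st10 : Summable (fun n : ℤ => ‖cexp ((4*n^2+4*n+1)*α)‖) := by
  apply Summable.congr (ZS' (cexp α) (X := cexp (4*α)) (q := cexp (4*α))
    (norm_exp_lt_one (by simp; linarith)) (Complex.exp_ne_zero _) (Complex.exp_ne_zero _))
  intro n
  rw [expzpow, expzpow, ← Complex.exp_add, ← Complex.exp_add]
  congr 1
  push_cast
  ring

set_option maxHeartbeats 1000000 in
lemma prodA :
    (∑' n : ℤ, (-1:ℂ)^n * cexp (2*n*β + 4*n^2*α)) * (∑' n : ℤ, (-1:ℂ)^n * cexp (4*n^2*α))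
      = (∑' n : ℤ, cexp (2*n*β + 8*n^2*α)) * (∑' n : ℤ, cexp (2*n*β + 8*n^2*α))
        - (∑' n : ℤ, cexp ((2*n+1)*β + (8*n^2+8*n+2)*α))
          * (∑' n : ℤ, cexp ((2*n+1)*β + (8*n^2+8*n+2)*α)) := by
  rw [tsum_mul_tsum_of_summable_norm (sg01 hα) (st01 hα)]
  rw [split_parity _ ((Summable.mul_norm (sg01 hα) (st01 hα)).of_norm)]
  dsimp only
  have heven : ∀ ab : ℤ × ℤ,
      ((-1:ℂ)^(ab.1+ab.2) * cexp (2*((ab.1+ab.2 : ℤ):ℂ)*β + 4*((ab.1+ab.2 : ℤ):ℂ)^2*α))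
        * ((-1:ℂ)^(ab.1-ab.2) * cexp (4*((ab.1-ab.2 : ℤ):ℂ)^2*α))
      = cexp (2*ab.1*β + 8*ab.1^2*α) * cexp (2*ab.2*β + 8*ab.2^2*α) := by
    intro ⟨a, b⟩
    rw [mul_mul_mul_comm, sgn2, one_mul, ← Complex.exp_add, ← Complex.exp_add]
    congr 1
    push_cast
    ring
  have hodd : ∀ ab : ℤ × ℤ,
      ((-1:ℂ)^(ab.1+ab.2+1) * cexp (2*((ab.1+ab.2+1 : ℤ):ℂ)*β + 4*((ab.1+ab.2+1 : ℤ):ℂ)^2*α))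
        * ((-1:ℂ)^(ab.1-ab.2) * cexp (4*((ab.1-ab.2 : ℤ):ℂ)^2*α))
      = -(cexp ((2*ab.1+1)*β + (8*ab.1^2+8*ab.1+2)*α)
          * cexp ((2*ab.2+1)*β + (8*ab.2^2+8*ab.2+2)*α)) := by
    intro ⟨a, b⟩
    rw [mul_mul_mul_comm, sgn2odd, neg_one_mul, ← Complex.exp_add, ← Complex.exp_add]
    congr 2
    push_cast
    ring
  rw [tsum_congr heven, tsum_congr hodd, tsum_neg,
    ← tsum_mul_tsum_of_summable_norm (sf00 hα) (sf00 hα),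
    ← tsum_mul_tsum_of_summable_norm (sf10 hα) (sf10 hα)]
  ring

set_option maxHeartbeats 1000000 in
lemma prodB :
    (∑' n : ℤ, cexp ((2*n+1)*β + (4*n^2+4*n+1)*α)) * (∑' n : ℤ, cexp ((4*n^2+4*n+1)*α))
      = 2 * ((∑' n : ℤ, cexp (2*n*β + 8*n^2*α))
          * (∑' n : ℤ, cexp ((2*n+1)*β + (8*n^2+8*n+2)*α))) := by
  rw [tsum_mul_tsum_of_summable_norm (sg10 hα) (st10 hα)]
  rw [split_parity _ ((Summable.mul_norm (sg10 hα) (st10 hα)).of_norm)]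
  dsimp only
  have heven : ∀ ab : ℤ × ℤ,
      cexp ((2*((ab.1+ab.2 : ℤ):ℂ)+1)*β + (4*((ab.1+ab.2 : ℤ):ℂ)^2+4*((ab.1+ab.2 : ℤ):ℂ)+1)*α)
        * cexp ((4*((ab.1-ab.2 : ℤ):ℂ)^2+4*((ab.1-ab.2 : ℤ):ℂ)+1)*α)
      = cexp ((2*ab.1+1)*β + (8*ab.1^2+8*ab.1+2)*α) * cexp (2*ab.2*β + 8*ab.2^2*α) := by
    intro ⟨a, b⟩
    rw [← Complex.exp_add, ← Complex.exp_add]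
    congr 1
    push_cast
    ring
  have hodd : ∀ ab : ℤ × ℤ,
      cexp ((2*((ab.1+ab.2+1 : ℤ):ℂ)+1)*β + (4*((ab.1+ab.2+1 : ℤ):ℂ)^2+4*((ab.1+ab.2+1 : ℤ):ℂ)+1)*α)
        * cexp ((4*((ab.1-ab.2 : ℤ):ℂ)^2+4*((ab.1-ab.2 : ℤ):ℂ)+1)*α)
      = cexp (2*((ab.1+1 : ℤ):ℂ)*β + 8*((ab.1+1 : ℤ):ℂ)^2*α) * cexp ((2*ab.2+1)*β + (8*ab.2^2+8*ab.2+2)*α) := by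
    intro ⟨a, b⟩
    rw [← Complex.exp_add, ← Complex.exp_add]
    congr 1
    push_cast
    ring
  have sfsh : Summable (fun n : ℤ => ‖cexp (2*((n+1 : ℤ):ℂ)*β + 8*((n+1 : ℤ):ℂ)^2*α)‖) :=
    ((Equiv.addRight (1:ℤ)).summable_iff
      (f := fun n : ℤ => ‖cexp (2*n*β + 8*n^2*α)‖)).mpr (sf00 hα)
  rw [tsum_congr heven, tsum_congr hodd,
    ← tsum_mul_tsum_of_summable_norm (sf10 hα) (sf00 hα),
    ← tsum_mul_tsum_of_summable_norm sfsh (sf10 hα)]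
  have h3 := (Equiv.addRight (1:ℤ)).tsum_eq (fun n : ℤ => cexp (2*n*β + 8*n^2*α))
  simp only [Equiv.coe_addRight] at h3
  rw [h3]
  ring

end Prods

def S (q : ℂ) (k : ℕ) : ℂ := ∑ i ∈ Finset.range k, Complex.log (1 - q^(2*i+2))

def c (q : ℂ) (m : ℕ) (n : ℤ) : ℂ :=
  if n.natAbs ≤ m then
    Complex.exp (S q (2*m) - S q ((m:ℤ) - n).toNat - S q ((m:ℤ) + n).toNat) else 0

section hyp
variable {q : ℂ} (hq : ‖q‖ < 1)

lemma S_zero : S q 0 = 0 := by simp [S]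

include hq

lemma fac_ne (k : ℕ) : (1:ℂ) - q^(2*k+2) ≠ 0 := by
  have h1 : ‖q^(2*k+2)‖ < 1 := by
    rw [norm_pow]; exact pow_lt_one₀ (norm_nonneg _) hq (by omega)
  intro h
  rw [sub_eq_zero] at h
  rw [← h] at h1
  simp at h1

lemma hS (k : ℕ) : cexp (S q (k+1)) = cexp (S q k) * (1 - q^(2*k+2)) := by
  rw [S, Finset.sum_range_succ, Complex.exp_add, Complex.exp_log (fac_ne hq k)]
  rfl

omit hq

lemma czero {m : ℕ} {n : ℤ} (h : m < n.natAbs) : c q m n = 0 := by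
  rw [c, if_neg (by omega)]

lemma csymm (m : ℕ) (n : ℤ) : c q m (-n) = c q m n := by
  rw [c, c, Int.natAbs_neg, sub_neg_eq_add, ← sub_eq_add_neg]
  by_cases h : n.natAbs ≤ m
  · rw [if_pos h, if_pos h, sub_right_comm]
  · rw [if_neg h, if_neg h]

include hq

set_option maxHeartbeats 3000000 in
lemma crec_nonneg (m : ℕ) (n : ℤ) (hn : 0 ≤ n) :
    c q (m+1) n = (1 + q^(4*m+2)) * c q m n
      + (q^2)^((m:ℤ)+1-n) * c q m (n-1) + (q^2)^((m:ℤ)+1+n) * c q m (n+1) := by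
  have hfne := fac_ne hq
  rcases lt_or_ge n ((m:ℤ)) with hlt | hge
  · -- interior case : 0 ≤ n ≤ m-1
    obtain ⟨a, ha⟩ : ∃ a:ℕ, (m:ℤ) - n = a+1 := ⟨((m:ℤ)-1-n).toNat, by omega⟩
    obtain ⟨bb, hbb⟩ : ∃ b:ℕ, (m:ℤ) + n = b+1 := ⟨((m:ℤ)+n-1).toNat, by omega⟩
    have h2m : 2*m = a+bb+2 := by omega
    have e0 : c q m n = cexp (S q (2*m) - S q (a+1) - S q (bb+1)) := by
      rw [c, if_pos (by omega)]
      rw [show ((m:ℤ) - n).toNat = a+1 by omega, show ((m:ℤ) + n).toNat = bb+1 by omega]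
    have e1 : c q m (n-1) = cexp (S q (2*m) - S q (a+2) - S q bb) := by
      rw [c, if_pos (by omega)]
      rw [show ((m:ℤ) - (n-1)).toNat = a+2 by omega, show ((m:ℤ) + (n-1)).toNat = bb by omega]
    have e2 : c q m (n+1) = cexp (S q (2*m) - S q a - S q (bb+2)) := by
      rw [c, if_pos (by omega)]
      rw [show ((m:ℤ) - (n+1)).toNat = a by omega, show ((m:ℤ) + (n+1)).toNat = bb+2 by omega]
    have e3 : c q (m+1) n = cexp (S q (2*m+2) - S q (a+2) - S q (bb+2)) := by
      rw [c, if_pos (by omega)]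
      rw [show (((m+1:ℕ)):ℤ) - n = ((a+2:ℕ):ℤ) by push_cast; omega,
        show (((m+1:ℕ)):ℤ) + n = ((bb+2:ℕ):ℤ) by push_cast; omega,
        Int.toNat_natCast, Int.toNat_natCast, show 2*(m+1) = 2*m+2 by ring]
    have et1 : (q^2)^((m:ℤ)+1-n) = q^(2*a+4) := by
      rw [show (m:ℤ)+1-n = ((a+2:ℕ):ℤ) by push_cast; omega, zpow_natCast, ← pow_mul,
        show 2*(a+2) = 2*a+4 by ring]
    have et2 : (q^2)^((m:ℤ)+1+n) = q^(2*bb+4) := by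
      rw [show (m:ℤ)+1+n = ((bb+2:ℕ):ℤ) by push_cast; omega, zpow_natCast, ← pow_mul,
        show 2*(bb+2) = 2*bb+4 by ring]
    have kA1 : cexp (S q (a+1)) = cexp (S q a) * (1 - q^(2*a+2)) := hS hq a
    have kA2 : cexp (S q (a+2)) = cexp (S q (a+1)) * (1 - q^(2*(a+1)+2)) := hS hq (a+1)
    have kB1 : cexp (S q (bb+1)) = cexp (S q bb) * (1 - q^(2*bb+2)) := hS hq bb
    have kB2 : cexp (S q (bb+2)) = cexp (S q (bb+1)) * (1 - q^(2*(bb+1)+2)) := hS hq (bb+1)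
    have kM1 : cexp (S q (2*m+1)) = cexp (S q (2*m)) * (1 - q^(2*(2*m)+2)) := hS hq (2*m)
    have kM2 : cexp (S q (2*m+2)) = cexp (S q (2*m+1)) * (1 - q^(2*(2*m+1)+2)) := hS hq (2*m+1)
    have dA2 : cexp (S q (a+2) - S q (a+1)) = 1 - q^(2*(a+1)+2) := by
      rw [Complex.exp_sub, kA2, mul_div_cancel_left₀ _ (Complex.exp_ne_zero _)]
    have dA1 : cexp (S q (a+1) - S q a) = 1 - q^(2*a+2) := by
      rw [Complex.exp_sub, kA1, mul_div_cancel_left₀ _ (Complex.exp_ne_zero _)]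
    have dB2 : cexp (S q (bb+2) - S q (bb+1)) = 1 - q^(2*(bb+1)+2) := by
      rw [Complex.exp_sub, kB2, mul_div_cancel_left₀ _ (Complex.exp_ne_zero _)]
    have dB1 : cexp (S q (bb+1) - S q bb) = 1 - q^(2*bb+2) := by
      rw [Complex.exp_sub, kB1, mul_div_cancel_left₀ _ (Complex.exp_ne_zero _)]
    set X := cexp (S q (a+2)) * cexp (S q (bb+2)) with hX
    have hXne : X ≠ 0 := mul_ne_zero (Complex.exp_ne_zero _) (Complex.exp_ne_zero _)
    have T3 : c q (m+1) n * X = cexp (S q (2*m)) * ((1 - q^(2*(2*m)+2)) * (1 - q^(2*(2*m+1)+2))) := by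
      have TT : cexp (S q (2*m+2))
          = cexp (S q (2*m)) * ((1 - q^(2*(2*m)+2)) * (1 - q^(2*(2*m+1)+2))) := by
        rw [kM2, kM1]
        ring
      rw [e3, hX]
      simp only [← Complex.exp_add]
      rw [← TT]
      congr 1
      ring
    have T0 : c q m n * X = cexp (S q (2*m)) * ((1 - q^(2*(a+1)+2)) * (1 - q^(2*(bb+1)+2))) := by
      rw [e0, hX, ← dA2, ← dB2]
      simp only [← Complex.exp_add]
      congr 1
      ring
    have T1 : c q m (n-1) * X = cexp (S q (2*m)) * ((1 - q^(2*bb+2)) * (1 - q^(2*(bb+1)+2))) := by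
      rw [e1, hX, ← dB1, ← dB2]
      simp only [← Complex.exp_add]
      congr 1
      ring
    have T2 : c q m (n+1) * X = cexp (S q (2*m)) * ((1 - q^(2*a+2)) * (1 - q^(2*(a+1)+2))) := by
      rw [e2, hX, ← dA1, ← dA2]
      simp only [← Complex.exp_add]
      congr 1
      ring
    rw [et1, et2, show 4*m+2 = 2*(a+bb)+6 by omega]
    apply mul_right_cancel₀ hXne
    rw [show ((1 + q^(2*(a+bb)+6)) * c q m n + q^(2*a+4) * c q m (n-1)
          + q^(2*bb+4) * c q m (n+1)) * X
        = (1 + q^(2*(a+bb)+6)) * (c q m n * X) + q^(2*a+4) * (c q m (n-1) * X)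
          + q^(2*bb+4) * (c q m (n+1) * X) by ring,
      T3, T0, T1, T2, show 2*(2*m)+2 = 2*(a+bb)+6 by omega,
      show 2*(2*m+1)+2 = 2*(a+bb)+8 by omega]
    ring
  · rcases eq_or_lt_of_le hge with heq | hgt
    · -- n = m
      rcases Nat.eq_zero_or_pos m with rfl | hm
      · -- m = 0, n = 0
        have hn0 : n = 0 := by omega
        subst hn0
        have e3 : c q 1 0 = cexp (S q 2 - S q 1 - S q 1) := by
          rw [c, if_pos (by omega)]
          norm_num
        have e0 : c q 0 0 = 1 := by
          rw [c, if_pos (by omega)]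
          norm_num [S_zero]
        rw [e3, e0, czero (by norm_num), czero (by norm_num), mul_zero, mul_zero,
          add_zero, add_zero, mul_one]
        have k0 : cexp (S q 1) = cexp (S q 0) * (1 - q^(2*0+2)) := hS hq 0
        have k1 : cexp (S q 2) = cexp (S q 1) * (1 - q^(2*1+2)) := hS hq 1
        simp only [Complex.exp_sub]
        rw [k1, k0, S_zero, Complex.exp_zero]
        have n1 := hfne 0
        have n2 := hfne 1
        field_simp
        ring
      · -- m ≥ 1, n = m
        obtain ⟨mm, rfl⟩ : ∃ mm:ℕ, m = mm+1 := ⟨m-1, by omega⟩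
        have hnm : n = ((mm:ℤ)+1) := by omega
        subst hnm
        have e3 : c q (mm+1+1) ((mm:ℤ)+1)
            = cexp (S q (2*mm+4) - S q 1 - S q (2*mm+3)) := by
          rw [c, if_pos (by omega)]
          rw [show (((mm+1+1:ℕ)):ℤ) - ((mm:ℤ)+1) = ((1:ℕ):ℤ) by push_cast; ring,
            show (((mm+1+1:ℕ)):ℤ) + ((mm:ℤ)+1) = ((2*mm+3:ℕ):ℤ) by push_cast; ring,
            Int.toNat_natCast, Int.toNat_natCast, show 2*(mm+1+1) = 2*mm+4 by ring]
        have e0 : c q (mm+1) ((mm:ℤ)+1)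
            = cexp (S q (2*mm+2) - S q 0 - S q (2*mm+2)) := by
          rw [c, if_pos (by omega)]
          rw [show (((mm+1:ℕ)):ℤ) - ((mm:ℤ)+1) = ((0:ℕ):ℤ) by push_cast; ring,
            show (((mm+1:ℕ)):ℤ) + ((mm:ℤ)+1) = ((2*mm+2:ℕ):ℤ) by push_cast; ring,
            Int.toNat_natCast, Int.toNat_natCast, show 2*(mm+1) = 2*mm+2 by ring]
        have e1 : c q (mm+1) (((mm:ℤ)+1)-1)
            = cexp (S q (2*mm+2) - S q 1 - S q (2*mm+1)) := by
          rw [c, if_pos (by omega)]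
          rw [show (((mm+1:ℕ)):ℤ) - (((mm:ℤ)+1)-1) = ((1:ℕ):ℤ) by push_cast; ring,
            show (((mm+1:ℕ)):ℤ) + (((mm:ℤ)+1)-1) = ((2*mm+1:ℕ):ℤ) by push_cast; ring,
            Int.toNat_natCast, Int.toNat_natCast, show 2*(mm+1) = 2*mm+2 by ring]
        have et1 : (q^2)^((((mm+1:ℕ)):ℤ)+1-((mm:ℤ)+1)) = q^2 := by
          rw [show (((mm+1:ℕ)):ℤ)+1-((mm:ℤ)+1) = 1 by push_cast; ring, zpow_one]
        rw [e3, e0, e1, czero (by omega), mul_zero, add_zero, et1]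
        have k0 : cexp (S q 1) = cexp (S q 0) * (1 - q^(2*0+2)) := hS hq 0
        have k1 : cexp (S q (2*mm+2)) = cexp (S q (2*mm+1)) * (1 - q^(2*(2*mm+1)+2)) :=
          hS hq (2*mm+1)
        have k2 : cexp (S q (2*mm+3)) = cexp (S q (2*mm+2)) * (1 - q^(2*(2*mm+2)+2)) :=
          hS hq (2*mm+2)
        have k3 : cexp (S q (2*mm+4)) = cexp (S q (2*mm+3)) * (1 - q^(2*(2*mm+3)+2)) :=
          hS hq (2*mm+3)
        simp only [Complex.exp_sub]
        rw [k3, k2, k1, k0, S_zero, Complex.exp_zero]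
        have n1 := hfne 0
        have n2 := hfne (2*mm+1)
        have n3 := hfne (2*mm+2)
        have n4 := hfne (2*mm+3)
        have x1 := Complex.exp_ne_zero (S q (2*mm+1))
        field_simp
        ring
    · -- n ≥ m+1
      rcases eq_or_lt_of_le (show (m:ℤ)+1 ≤ n by omega) with heq | hgt2
      · -- n = m+1
        have hnm : n = ((m:ℤ)+1) := by omega
        subst hnm
        have e3 : c q (m+1) ((m:ℤ)+1) = cexp (S q (2*m+2) - S q 0 - S q (2*m+2)) := by
          rw [c, if_pos (by omega)]
          rw [show (((m+1:ℕ)):ℤ) - ((m:ℤ)+1) = ((0:ℕ):ℤ) by push_cast; ring,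
            show (((m+1:ℕ)):ℤ) + ((m:ℤ)+1) = ((2*m+2:ℕ):ℤ) by push_cast; ring,
            Int.toNat_natCast, Int.toNat_natCast, show 2*(m+1) = 2*m+2 by ring]
        have e1 : c q m (((m:ℤ)+1)-1) = cexp (S q (2*m) - S q 0 - S q (2*m)) := by
          rw [c, if_pos (by omega)]
          rw [show ((m:ℕ):ℤ) - (((m:ℤ)+1)-1) = ((0:ℕ):ℤ) by push_cast; ring,
            show ((m:ℕ):ℤ) + (((m:ℤ)+1)-1) = ((2*m:ℕ):ℤ) by push_cast; ring,
            Int.toNat_natCast, Int.toNat_natCast]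
        have et1 : (q^2)^((m:ℤ)+1-((m:ℤ)+1)) = 1 := by
          rw [show (m:ℤ)+1-((m:ℤ)+1) = 0 by ring, zpow_zero]
        rw [e3, e1, czero (by omega), czero (by omega)]
        simp only [mul_zero, add_zero, zero_add, et1, one_mul, S_zero, sub_zero, sub_self,
          Complex.exp_zero, zpow_zero]
      · -- n ≥ m+2 : everything 0
        rw [czero (by omega), czero (by omega), czero (by omega), czero (by omega)]
        ring

lemma crec (m : ℕ) (n : ℤ) :
    c q (m+1) n = (1 + q^(4*m+2)) * c q m n
      + (q^2)^((m:ℤ)+1-n) * c q m (n-1) + (q^2)^((m:ℤ)+1+n) * c q m (n+1) := by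
  rcases le_or_gt 0 n with hn | hn
  · exact crec_nonneg hq m n hn
  · have key := crec_nonneg hq m (-n) (by omega)
    have h1 : c q (m+1) (-n) = c q (m+1) n := csymm (m+1) n
    have h2 : c q m (-n) = c q m n := csymm m n
    have h3 : c q m (-n-1) = c q m (n+1) := by
      rw [show -n-1 = -(n+1) by ring, csymm]
    have h4 : c q m (-n+1) = c q m (n-1) := by
      rw [show -n+1 = -(n-1) by ring, csymm]
    rw [h1, h2, h3, h4] at key
    rw [key, show (m:ℤ)+1-(-n) = (m:ℤ)+1+n by ring, show (m:ℤ)+1+(-n) = (m:ℤ)+1-n by ring]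
    ring

omit hq in
lemma summable_of_bounded_support' (h : ℤ → ℂ) (M : ℕ)
    (hh : ∀ n : ℤ, M < n.natAbs → h n = 0) : Summable h := by
  apply summable_of_ne_finset_zero (s := Finset.Icc (-(M:ℤ)) M)
  intro n hn
  apply hh
  simp only [Finset.mem_Icc] at hn
  omega

omit hq in
lemma zpow2_helper (hq0 : q ≠ 0) (k : ℤ) : (q^2)^k = q^(2*k) := by
  rw [← zpow_natCast q 2, ← zpow_mul]
  norm_num

include hq

lemma fin_id (hq0 : q ≠ 0) {x : ℂ} (hx : x ≠ 0) (m : ℕ) :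
    ∑' n : ℤ, c q m n * (x^n * q^(n^2))
      = ∏ j ∈ Finset.range m, ((1 + x*q^(2*j+1)) * (1 + x⁻¹*q^(2*j+1))) := by
  induction m with
  | zero =>
    rw [Finset.range_zero, Finset.prod_empty]
    rw [tsum_eq_single (0:ℤ) (fun b hb => by
      rw [czero (show 0 < b.natAbs by omega), zero_mul])]
    simp [c, S_zero]
  | succ m ih =>
    rw [Finset.prod_range_succ, ← ih]
    have hs1 : Summable (fun n:ℤ => (1+q^(4*m+2)) * (c q m n * (x^n*q^(n^2)))) :=
      summable_of_bounded_support' _ m (fun n hn => by simp [czero hn])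
    have hs2 : Summable (fun n:ℤ => (q^2)^((m:ℤ)+1-n) * c q m (n-1) * (x^n*q^(n^2))) :=
      summable_of_bounded_support' _ (m+1) (fun n hn => by
        rw [czero (show m < (n-1).natAbs by omega)]
        ring_nf)
    have hs3 : Summable (fun n:ℤ => (q^2)^((m:ℤ)+1+n) * c q m (n+1) * (x^n*q^(n^2))) :=
      summable_of_bounded_support' _ (m+1) (fun n hn => by
        rw [czero (show m < (n+1).natAbs by omega)]
        ring_nf)
    have step1 : ∑' n : ℤ, c q (m+1) n * (x^n * q^(n^2))
        = ∑' n : ℤ, ((1+q^(4*m+2)) * (c q m n * (x^n*q^(n^2)))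
            + ((q^2)^((m:ℤ)+1-n) * c q m (n-1) * (x^n*q^(n^2))
              + (q^2)^((m:ℤ)+1+n) * c q m (n+1) * (x^n*q^(n^2)))) := by
      apply tsum_congr
      intro n
      rw [crec hq m n]
      ring
    rw [step1, Summable.tsum_add hs1 (hs2.add hs3), Summable.tsum_add hs2 hs3, tsum_mul_left]
    -- shift the second sum
    have e2 := (Equiv.addRight (1:ℤ)).tsum_eq
      (fun n : ℤ => (q^2)^((m:ℤ)+1-n) * c q m (n-1) * (x^n*q^(n^2)))
    simp only [Equiv.coe_addRight, add_sub_cancel_right] at e2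
    have e2' : ∀ n : ℤ, (q^2)^((m:ℤ)+1-(n+1)) * c q m n * (x^(n+1)*q^((n+1)^2))
        = (c q m n * (x^n * q^(n^2))) * (x * q^(2*m+1)) := by
      intro n
      have f1 : x^(n+1) = x^n * x := zpow_add_one₀ hx n
      have f2 : q^((n+1)^2) = q^(n^2) * q^(2*n+1) := by
        rw [← zpow_add₀ hq0]
        congr 1
        ring
      have f3 : (q^2)^((m:ℤ)+1-(n+1)) * q^(2*n+1) = q^(2*m+1) := by
        rw [zpow2_helper hq0, ← zpow_add₀ hq0, ← zpow_natCast q (2*m+1)]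
        congr 1
        push_cast
        ring
      rw [f1, f2, ← f3]
      ring
    rw [tsum_congr e2'] at e2
    -- shift the third sum
    have e3 := (Equiv.subRight (1:ℤ)).tsum_eq
      (fun n : ℤ => (q^2)^((m:ℤ)+1+n) * c q m (n+1) * (x^n*q^(n^2)))
    simp only [Equiv.subRight_apply, sub_add_cancel] at e3
    have e3' : ∀ n : ℤ, (q^2)^((m:ℤ)+1+(n-1)) * c q m n * (x^(n-1)*q^((n-1)^2))
        = (c q m n * (x^n * q^(n^2))) * (x⁻¹ * q^(2*m+1)) := by
      intro n
      have f1 : x^(n-1) = x^n * x⁻¹ := by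
        rw [zpow_sub_one₀ hx]
      have f2 : q^((n-1)^2) = q^(n^2) * q^(1-2*n) := by
        rw [← zpow_add₀ hq0]
        congr 1
        ring
      have f3 : (q^2)^((m:ℤ)+1+(n-1)) * q^(1-2*n) = q^(2*m+1) := by
        rw [zpow2_helper hq0, ← zpow_add₀ hq0, ← zpow_natCast q (2*m+1)]
        congr 1
        push_cast
        ring
      rw [f1, f2, ← f3]
      ring
    rw [tsum_congr e3'] at e3
    rw [← e2, ← e3, tsum_mul_right, tsum_mul_right]
    have hG : (1 + x*q^(2*m+1)) * (1 + x⁻¹*q^(2*m+1))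
        = 1 + q^(4*m+2) + x*q^(2*m+1) + x⁻¹*q^(2*m+1) := by
      field_simp
      ring
    rw [hG]
    ring

end hyp


section hyp2
variable {q : ℂ} (hq : ‖q‖ < 1)
include hq

set_option maxHeartbeats 1000000 in
lemma JTP (hq0 : q ≠ 0) {x : ℂ} (hx : x ≠ 0)
    (hZ : Summable (fun n : ℤ => ‖x ^ n * q ^ (n^2)‖))
    (hx1 : ∀ j : ℕ, 1 + x * q ^ (2*j+1) ≠ 0) (hx2 : ∀ j : ℕ, 1 + x⁻¹ * q ^ (2*j+1) ≠ 0) :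
    ∑' n : ℤ, x ^ n * q ^ (n^2)
      = cexp ((∑' i : ℕ, Complex.log (1 - q^(2*i+2)))
          + (∑' i : ℕ, Complex.log (1 + x * q^(2*i+1)))
          + (∑' i : ℕ, Complex.log (1 + x⁻¹ * q^(2*i+1)))) := by
  have hlgnorm : Summable (fun i : ℕ => ‖Complex.log (1 - q^(2*i+2))‖) := by
    have h0 : Summable (fun i : ℕ => ‖-(q^(2*i+2))‖) := by
      apply Summable.congr (H1 hq 2 2 (by norm_num))
      intro i
      rw [norm_neg]
    apply Summable.congr (H2 h0)
    intro i
    rw [← sub_eq_add_neg]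
  have hlg : Summable (fun i : ℕ => Complex.log (1 - q^(2*i+2))) := hlgnorm.of_norm
  set L := ∑' i : ℕ, Complex.log (1 - q^(2*i+2)) with hL
  set BL := ∑' i : ℕ, ‖Complex.log (1 - q^(2*i+2))‖ with hBL
  have hSL : Tendsto (fun k => S q k) atTop (𝓝 L) := hlg.hasSum.tendsto_sum_nat
  have hSb : ∀ k, ‖S q k‖ ≤ BL := fun k => H3 hlgnorm k
  have hBL0 : 0 ≤ BL := tsum_nonneg (fun i => norm_nonneg _)
  -- pointwise limits
  have hpt : ∀ n : ℤ, Tendsto (fun m : ℕ => c q m n * (x^n*q^(n^2))) atTop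
      (𝓝 (cexp (-L) * (x^n*q^(n^2)))) := by
    intro n
    apply Tendsto.mul_const
    have h2m : Tendsto (fun m:ℕ => 2*m) atTop atTop :=
      tendsto_atTop_atTop.mpr (fun b => ⟨b, fun a ha => by omega⟩)
    have hmn1 : Tendsto (fun m:ℕ => ((m:ℤ) - n).toNat) atTop atTop :=
      tendsto_atTop_atTop.mpr (fun b => ⟨b + n.natAbs, fun a ha => by omega⟩)
    have hmn2 : Tendsto (fun m:ℕ => ((m:ℤ) + n).toNat) atTop atTop :=
      tendsto_atTop_atTop.mpr (fun b => ⟨b + n.natAbs, fun a ha => by omega⟩)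
    have hc : Tendsto (fun m => cexp (S q (2*m) - S q ((m:ℤ)-n).toNat - S q ((m:ℤ)+n).toNat))
        atTop (𝓝 (cexp (L - L - L))) :=
      (Complex.continuous_exp.tendsto _).comp
        (((hSL.comp h2m).sub (hSL.comp hmn1)).sub (hSL.comp hmn2))
    rw [show L - L - L = -L by ring] at hc
    apply hc.congr'
    filter_upwards [eventually_ge_atTop n.natAbs] with m hm
    rw [c, if_pos hm]
  -- uniform bound
  have hbd : ∀ (m:ℕ) (n:ℤ), ‖c q m n * (x^n*q^(n^2))‖
      ≤ Real.exp (3*BL) * ‖x^n*q^(n^2)‖ := by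
    intro m n
    rw [norm_mul]
    apply mul_le_mul_of_nonneg_right _ (norm_nonneg _)
    by_cases h : n.natAbs ≤ m
    · rw [c, if_pos h, Complex.norm_exp]
      apply Real.exp_le_exp.mpr
      have h1 := Complex.re_le_norm (S q (2*m) - S q ((m:ℤ)-n).toNat - S q ((m:ℤ)+n).toNat)
      have h2 : ‖S q (2*m) - S q ((m:ℤ)-n).toNat - S q ((m:ℤ)+n).toNat‖
          ≤ ‖S q (2*m)‖ + ‖S q ((m:ℤ)-n).toNat‖ + ‖S q ((m:ℤ)+n).toNat‖ := by
        calc ‖S q (2*m) - S q ((m:ℤ)-n).toNat - S q ((m:ℤ)+n).toNat‖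
            ≤ ‖S q (2*m) - S q ((m:ℤ)-n).toNat‖ + ‖S q ((m:ℤ)+n).toNat‖ := norm_sub_le _ _
          _ ≤ ‖S q (2*m)‖ + ‖S q ((m:ℤ)-n).toNat‖ + ‖S q ((m:ℤ)+n).toNat‖ := by
              have := norm_sub_le (S q (2*m)) (S q ((m:ℤ)-n).toNat)
              linarith
      have b1 := hSb (2*m)
      have b2 := hSb ((m:ℤ)-n).toNat
      have b3 := hSb ((m:ℤ)+n).toNat
      have h1' : (S q (2*m) - S q ((m:ℤ)-n).toNat - S q ((m:ℤ)+n).toNat).re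
          ≤ ‖S q (2*m) - S q ((m:ℤ)-n).toNat - S q ((m:ℤ)+n).toNat‖ := h1
      linarith
    · rw [c, if_neg h, norm_zero]
      positivity
  have hdom : Tendsto (fun m : ℕ => ∑' n : ℤ, c q m n * (x^n*q^(n^2))) atTop
      (𝓝 (∑' n : ℤ, cexp (-L) * (x^n*q^(n^2)))) := by
    apply tendsto_tsum_of_dominated_convergence (hZ.mul_left (Real.exp (3*BL))) hpt
    exact Filter.Eventually.of_forall (fun m k => hbd m k)
  -- the product side
  have hxs : Summable (fun j:ℕ => ‖x * q^(2*j+1)‖) := by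
    apply Summable.congr ((H1 hq 2 1 (by norm_num)).mul_left ‖x‖)
    intro j
    rw [← norm_mul]
  have hys : Summable (fun j:ℕ => ‖x⁻¹ * q^(2*j+1)‖) := by
    apply Summable.congr ((H1 hq 2 1 (by norm_num)).mul_left ‖x⁻¹‖)
    intro j
    rw [← norm_mul]
  have hXs : Summable (fun j:ℕ => Complex.log (1 + x*q^(2*j+1))) := H2' hxs
  have hYs : Summable (fun j:ℕ => Complex.log (1 + x⁻¹*q^(2*j+1))) := H2' hys
  set X := ∑' j:ℕ, Complex.log (1 + x*q^(2*j+1)) with hX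
  set Y := ∑' j:ℕ, Complex.log (1 + x⁻¹*q^(2*j+1)) with hY
  have hprod : ∀ m : ℕ, ∏ j ∈ Finset.range m, ((1 + x*q^(2*j+1)) * (1 + x⁻¹*q^(2*j+1)))
      = cexp (∑ j ∈ Finset.range m,
          (Complex.log (1 + x*q^(2*j+1)) + Complex.log (1 + x⁻¹*q^(2*j+1)))) := by
    intro m
    rw [Complex.exp_sum]
    apply Finset.prod_congr rfl
    intro j _
    rw [Complex.exp_add, Complex.exp_log (hx1 j), Complex.exp_log (hx2 j)]
  have hlim2 : Tendsto (fun m : ℕ => ∏ j ∈ Finset.range m,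
      ((1 + x*q^(2*j+1)) * (1 + x⁻¹*q^(2*j+1)))) atTop (𝓝 (cexp (X + Y))) := by
    have hsum := (hXs.add hYs).hasSum.tendsto_sum_nat
    rw [Summable.tsum_add hXs hYs] at hsum
    have := (Complex.continuous_exp.tendsto _).comp hsum
    apply this.congr
    intro m
    simp only [Function.comp_apply]
    rw [hprod m]
  -- identify limits
  have heq : (fun m : ℕ => ∑' n : ℤ, c q m n * (x^n*q^(n^2)))
      = (fun m : ℕ => ∏ j ∈ Finset.range m, ((1 + x*q^(2*j+1)) * (1 + x⁻¹*q^(2*j+1)))) :=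
    funext (fun m => fin_id hq hq0 hx m)
  rw [heq] at hdom
  have hfinal : ∑' n : ℤ, cexp (-L) * (x^n*q^(n^2)) = cexp (X + Y) :=
    tendsto_nhds_unique hdom hlim2
  rw [tsum_mul_left] at hfinal
  have hne : cexp (-L) ≠ 0 := Complex.exp_ne_zero _
  calc ∑' n : ℤ, x ^ n * q ^ (n^2)
      = cexp L * (cexp (-L) * ∑' n : ℤ, x ^ n * q ^ (n^2)) := by
        rw [← mul_assoc, ← Complex.exp_add]
        norm_num
    _ = cexp L * cexp (X + Y) := by rw [hfinal]
    _ = cexp (L + X + Y) := by rw [← Complex.exp_add, add_assoc]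

end hyp2

-- new helpers
lemma one_add_ne {u : ℂ} (hu : ‖u‖ < 1) : (1:ℂ) + u ≠ 0 := by
  intro h
  have : u = -1 := by linear_combination h
  rw [this] at hu
  simp at hu

lemma one_sub_ne {u : ℂ} (hu : ‖u‖ < 1) : (1:ℂ) - u ≠ 0 := by
  have := one_add_ne (u := -u) (by simpa using hu)
  simpa [sub_eq_add_neg] using this

lemma logsum_summable {P : ℂ} (hP : ‖P‖ < 1) (a b : ℕ) (ha : 0 < a) (c : ℂ) (hc : ‖c‖ ≤ 1) :
    Summable (fun i : ℕ => Complex.log (1 + c * P^(a*i+b))) := by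
  apply H2'
  apply Summable.of_nonneg_of_le (fun i => norm_nonneg _) _ (H1 hP a b ha)
  intro i
  rw [norm_mul]
  calc ‖c‖ * ‖P^(a*i+b)‖ ≤ 1 * ‖P^(a*i+b)‖ :=
        mul_le_mul_of_nonneg_right hc (norm_nonneg _)
    _ = ‖P^(a*i+b)‖ := one_mul _

lemma log_split {u : ℂ} (hu : ‖u‖ < 1) :
    Complex.log ((1-u)*(1+u)) = Complex.log (1-u) + Complex.log (1+u) := by
  have h1 := one_sub_ne hu
  have h2 := one_add_ne hu
  apply Complex.log_mul h1 h2
  have r1 : 0 < (1-u).re := by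
    have := Complex.abs_re_le_norm u
    simp only [Complex.sub_re, Complex.one_re]
    have : |u.re| ≤ ‖u‖ := Complex.abs_re_le_norm u
    cases abs_le.mp this
    linarith
  have r2 : 0 < (1+u).re := by
    have : |u.re| ≤ ‖u‖ := Complex.abs_re_le_norm u
    simp only [Complex.add_re, Complex.one_re]
    cases abs_le.mp this
    linarith
  have a1 : |Complex.arg (1-u)| < π/2 :=
    Complex.abs_arg_lt_pi_div_two_iff.mpr (Or.inl r1)
  have a2 : |Complex.arg (1+u)| < π/2 :=
    Complex.abs_arg_lt_pi_div_two_iff.mpr (Or.inl r2)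
  have b1 := abs_lt.mp a1
  have b2 := abs_lt.mp a2
  constructor
  · linarith [b1.1, b2.1]
  · linarith [b1.2, b2.2]


end TP

theorem stmt15 (τ z : ℂ) (hτ : 0 < τ.im)
    (h1 : theta10 (2*τ) z ≠ 0) (h2 : theta00 (2*τ) z ≠ 0) (h3 : theta10 τ z ≠ 0) :
    theta00 (2*τ) z / theta10 (2*τ) z - theta10 (2*τ) z / theta00 (2*τ) z =
      ((dedekindEta (τ/2))^2 / (dedekindEta (2*τ))^2) * (theta01 τ z / theta10 τ z) := by
  have hpi := Real.pi_pos
  set α : ℂ := (π:ℂ)*Complex.I*τ/4 with hαdef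
  set β : ℂ := (π:ℂ)*Complex.I*z with hβdef
  have hαre : α.re < 0 := by
    have h : α = ((π/4 : ℝ):ℂ) * (Complex.I*τ) := by rw [hαdef]; push_cast; ring
    rw [h, Complex.re_ofReal_mul]
    have h2 : (Complex.I*τ).re = -τ.im := by simp
    rw [h2]
    have : 0 < (π/4) * τ.im := by positivity
    linarith
  set P : ℂ := cexp (4*α) with hPdef
  have hP : ‖P‖ < 1 := by
    apply TP.norm_exp_lt_one
    have h : (4:ℂ)*α = ((4:ℝ):ℂ) * α := by norm_num
    rw [h, Complex.re_ofReal_mul]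
    linarith
  have hP0 : P ≠ 0 := Complex.exp_ne_zero _
  -- theta function rewrites
  have hth00 : theta00 (2*τ) z = ∑' n : ℤ, cexp (2*(n:ℂ)*β + 8*(n:ℂ)^2*α) := by
    rw [theta00]
    apply tsum_congr
    intro n
    rw [← Complex.exp_add]
    congr 1
    rw [hαdef, hβdef]
    ring
  have hth10b : theta10 (2*τ) z = ∑' n : ℤ, cexp ((2*(n:ℂ)+1)*β + (8*(n:ℂ)^2+8*(n:ℂ)+2)*α) := by
    rw [theta10]
    apply tsum_congr
    intro n
    rw [← Complex.exp_add]
    congr 1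
    rw [hαdef, hβdef]
    ring
  have hth01 : theta01 τ z = ∑' n : ℤ, (-1:ℂ)^n * cexp (2*(n:ℂ)*β + 4*(n:ℂ)^2*α) := by
    rw [theta01]
    apply tsum_congr
    intro n
    rw [mul_assoc, ← Complex.exp_add]
    congr 2
    rw [hαdef, hβdef]
    ring
  have hth10 : theta10 τ z = ∑' n : ℤ, cexp ((2*(n:ℂ)+1)*β + (4*(n:ℂ)^2+4*(n:ℂ)+1)*α) := by
    rw [theta10]
    apply tsum_congr
    intro n
    rw [← Complex.exp_add]
    congr 1
    rw [hαdef, hβdef]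
    ring
  -- product identities
  have hA := TP.prodA (α := α) (β := β) hαre
  have hB := TP.prodB (α := α) (β := β) hαre
  -- summability of logs helpers
  have insth : ∀ (aa bb : ℕ), 0 < aa → Summable (fun i:ℕ => Complex.log (1 + P^(aa*i+bb))) := by
    intro aa bb h
    apply (TP.logsum_summable hP aa bb h 1 (by norm_num)).congr
    intro i
    rw [one_mul]
  have instm : ∀ (aa bb : ℕ), 0 < aa → Summable (fun i:ℕ => Complex.log (1 - P^(aa*i+bb))) := by
    intro aa bb h
    apply (TP.logsum_summable hP aa bb h (-1) (by norm_num)).congr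
    intro i
    rw [neg_one_mul, ← sub_eq_add_neg]
  have hPpow : ∀ k : ℕ, 0 < k → ‖P^k‖ < 1 := by
    intro k hk
    rw [norm_pow]
    exact pow_lt_one₀ (norm_nonneg _) hP (by omega)
  -- JTP instance 1 : x = -1
  have hZ1 : Summable (fun n : ℤ => ‖((-1:ℂ)) ^ n * P ^ (n^2)‖) :=
    TP.ZS hP hP0 (by norm_num)
  have hx1a : ∀ j : ℕ, (1:ℂ) + (-1:ℂ) * P ^ (2*j+1) ≠ 0 := by
    intro j
    apply TP.one_add_ne
    rw [norm_mul, norm_neg, norm_one, one_mul]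
    exact hPpow _ (by omega)
  have hx2a : ∀ j : ℕ, (1:ℂ) + ((-1:ℂ))⁻¹ * P ^ (2*j+1) ≠ 0 := by
    intro j
    rw [show ((-1:ℂ))⁻¹ = -1 by norm_num]
    exact hx1a j
  have hJ1 := TP.JTP hP hP0 (x := (-1:ℂ)) (by norm_num) hZ1 hx1a hx2a
  simp only [show ((-1:ℂ))⁻¹ = (-1:ℂ) by norm_num, neg_one_mul, ← sub_eq_add_neg] at hJ1
  -- JTP instance 2 : x = P
  have hZ2 : Summable (fun n : ℤ => ‖P ^ n * P ^ (n^2)‖) := TP.ZS hP hP0 hP0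
  have hx1b : ∀ j : ℕ, (1:ℂ) + P * P ^ (2*j+1) ≠ 0 := by
    intro j
    apply TP.one_add_ne
    rw [show P * P^(2*j+1) = P^(2*j+2) from (pow_succ' P (2*j+1)).symm]
    exact hPpow _ (by omega)
  have hPinv : ∀ j : ℕ, P⁻¹ * P^(2*j+1) = P^(2*j) := by
    intro j
    rw [pow_succ' P (2*j), ← mul_assoc, inv_mul_cancel₀ hP0, one_mul]
  have hx2b : ∀ j : ℕ, (1:ℂ) + P⁻¹ * P ^ (2*j+1) ≠ 0 := by
    intro j
    rw [hPinv j]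
    rcases Nat.eq_zero_or_pos j with rfl | hj
    · norm_num
    · exact TP.one_add_ne (hPpow _ (by omega))
  have hJ2 := TP.JTP hP hP0 (x := P) hP0 hZ2 hx1b hx2b
  simp only [show ∀ i:ℕ, P * P^(2*i+1) = P^(2*i+2) from fun i => (pow_succ' P (2*i+1)).symm,
    hPinv] at hJ2
  -- extract log 2 from the last sum of hJ2
  have hN2 : (∑' i:ℕ, Complex.log ((1:ℂ) + P^(2*i)))
      = Complex.log 2 + ∑' i:ℕ, Complex.log (1 + P^(2*i+2)) := by
    have hs : Summable (fun i:ℕ => Complex.log ((1:ℂ) + P^(2*i))) :=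
      (insth 2 0 (by norm_num)).congr (fun i => by norm_num)
    have e0 : Complex.log ((1:ℂ) + P^(2*0)) = Complex.log 2 := by norm_num
    have e1 : (∑' b:ℕ, Complex.log ((1:ℂ) + P^(2*(b+1))))
        = ∑' i:ℕ, Complex.log ((1:ℂ) + P^(2*i+2)) :=
      tsum_congr (fun b => by rw [show 2*(b+1) = 2*b+2 by ring])
    rw [Summable.tsum_eq_zero_add hs, e0, e1]
  rw [hN2] at hJ2
  -- link t01 and t10 sums to the JTP forms
  have ht01 : (∑' n : ℤ, (-1:ℂ)^n * cexp (4*(n:ℂ)^2*α))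
      = cexp ((∑' i:ℕ, Complex.log (1 - P^(2*i+2))) + (∑' i:ℕ, Complex.log (1 - P^(2*i+1)))
          + (∑' i:ℕ, Complex.log (1 - P^(2*i+1)))) := by
    rw [← hJ1]
    apply tsum_congr
    intro n
    congr 1
    rw [hPdef, TP.expzpow]
    congr 1
    push_cast
    ring
  have ht10 : (∑' n : ℤ, cexp ((4*(n:ℂ)^2+4*(n:ℂ)+1)*α))
      = cexp α * (2 * cexp ((∑' i:ℕ, Complex.log (1 - P^(2*i+2)))
          + (∑' i:ℕ, Complex.log (1 + P^(2*i+2))) + (∑' i:ℕ, Complex.log (1 + P^(2*i+2))))) := by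
    have step : (∑' n : ℤ, cexp ((4*(n:ℂ)^2+4*(n:ℂ)+1)*α))
        = cexp α * ∑' n : ℤ, P ^ n * P ^ (n^2) := by
      rw [← tsum_mul_left]
      apply tsum_congr
      intro n
      rw [hPdef, TP.expzpow, TP.expzpow, ← Complex.exp_add, ← Complex.exp_add]
      congr 1
      push_cast
      ring
    rw [step, hJ2, show (∑' i:ℕ, Complex.log (1 - P^(2*i+2)))
        + (∑' i:ℕ, Complex.log (1 + P^(2*i+2)))
        + (Complex.log 2 + ∑' i:ℕ, Complex.log (1 + P^(2*i+2)))
      = Complex.log 2 + ((∑' i:ℕ, Complex.log (1 - P^(2*i+2)))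
          + (∑' i:ℕ, Complex.log (1 + P^(2*i+2))) + (∑' i:ℕ, Complex.log (1 + P^(2*i+2)))) by ring,
      Complex.exp_add, Complex.exp_log (by norm_num : (2:ℂ) ≠ 0)]
  -- eta products
  have hterm1 : ∀ n:ℕ, cexp (2*(π:ℂ)*Complex.I*(τ/2)*((n:ℂ)+1)) = P^(n+1) := by
    intro n
    rw [hPdef, ← Complex.exp_nat_mul]
    congr 1
    rw [hαdef]
    push_cast
    ring
  have hterm2 : ∀ n:ℕ, cexp (2*(π:ℂ)*Complex.I*(2*τ)*((n:ℂ)+1)) = P^(4*n+4) := by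
    intro n
    rw [hPdef, ← Complex.exp_nat_mul]
    congr 1
    rw [hαdef]
    push_cast
    ring
  have hprod1 : (∏' n:ℕ, ((1:ℂ) - cexp (2*(π:ℂ)*Complex.I*(τ/2)*((n:ℂ)+1))))
      = cexp (∑' n:ℕ, Complex.log (1 - P^(n+1))) := by
    rw [tprod_congr (fun n => by rw [hterm1 n] :
      ∀ n:ℕ, (1:ℂ) - cexp (2*(π:ℂ)*Complex.I*(τ/2)*((n:ℂ)+1)) = 1 - P^(n+1))]
    have hfn : ∀ (x:Unit) (n:ℕ), (1:ℂ) - P^(n+1) ≠ 0 :=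
      fun _ n => TP.one_sub_ne (hPpow _ (by omega))
    have hsum : ∀ (_:Unit), Summable (fun n:ℕ => Complex.log ((1:ℂ) - P^(n+1))) := by
      intro _
      apply (instm 1 1 (by norm_num)).congr
      intro i
      rw [one_mul]
    have h := Complex.cexp_tsum_eq_tprod (f := fun n => (1:ℂ) - P^(n+1)) (hfn ()) (hsum ())
    exact h.symm
  have hprod2 : (∏' n:ℕ, ((1:ℂ) - cexp (2*(π:ℂ)*Complex.I*(2*τ)*((n:ℂ)+1))))
      = cexp (∑' n:ℕ, Complex.log (1 - P^(4*n+4))) := by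
    rw [tprod_congr (fun n => by rw [hterm2 n] :
      ∀ n:ℕ, (1:ℂ) - cexp (2*(π:ℂ)*Complex.I*(2*τ)*((n:ℂ)+1)) = 1 - P^(4*n+4))]
    have hfn : ∀ (x:Unit) (n:ℕ), (1:ℂ) - P^(4*n+4) ≠ 0 :=
      fun _ n => TP.one_sub_ne (hPpow _ (by omega))
    have hsum : ∀ (_:Unit), Summable (fun n:ℕ => Complex.log ((1:ℂ) - P^(4*n+4))) :=
      fun _ => instm 4 4 (by norm_num)
    have h := Complex.cexp_tsum_eq_tprod (f := fun n => (1:ℂ) - P^(4*n+4)) (hfn ()) (hsum ())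
    exact h.symm
  have hE1 : dedekindEta (τ/2)
      = cexp ((π:ℂ)*Complex.I*(τ/2)/12 + ∑' n:ℕ, Complex.log (1 - P^(n+1))) := by
    rw [dedekindEta, hprod1, ← Complex.exp_add]
  have hE2 : dedekindEta (2*τ)
      = cexp ((π:ℂ)*Complex.I*(2*τ)/12 + ∑' n:ℕ, Complex.log (1 - P^(4*n+4))) := by
    rw [dedekindEta, hprod2, ← Complex.exp_add]
  have hE2ne : dedekindEta (2*τ) ≠ 0 := by
    rw [hE2]
    exact Complex.exp_ne_zero _
  -- the two splitting identities
  have hAsplit : (∑' k:ℕ, Complex.log ((1:ℂ) - P^(2*k+1)))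
      + (∑' k:ℕ, Complex.log ((1:ℂ) - P^(2*k+2)))
      = (∑' n:ℕ, Complex.log ((1:ℂ) - P^(n+1))) := by
    have h := tsum_even_add_odd (f := fun n:ℕ => Complex.log ((1:ℂ) - P^(n+1)))
      ((instm 2 1 (by norm_num)).congr (fun i => by norm_num))
      ((instm 2 2 (by norm_num)).congr (fun i => by norm_num))
    have hcv : (∑' k:ℕ, Complex.log ((1:ℂ) - P^(2*k+1+1)))
        = ∑' k:ℕ, Complex.log ((1:ℂ) - P^(2*k+2)) := tsum_congr (fun k => by norm_num)
    rw [hcv] at h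
    exact h
  have hDsplit : (∑' n:ℕ, Complex.log ((1:ℂ) - P^(4*n+4)))
      = (∑' n:ℕ, Complex.log ((1:ℂ) - P^(2*n+2))) + (∑' n:ℕ, Complex.log ((1:ℂ) + P^(2*n+2))) := by
    rw [← Summable.tsum_add (instm 2 2 (by norm_num)) (insth 2 2 (by norm_num))]
    apply tsum_congr
    intro n
    have hu : ‖P^(2*n+2)‖ < 1 := hPpow _ (by omega)
    have h := TP.log_split hu
    rw [show ((1:ℂ) - P^(2*n+2))*(1+P^(2*n+2)) = 1 - P^(4*n+4) by ring] at h
    exact h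
  -- key identities
  have key1 : theta01 τ z * (∑' n : ℤ, (-1:ℂ)^n * cexp (4*(n:ℂ)^2*α))
      = theta00 (2*τ) z * theta00 (2*τ) z - theta10 (2*τ) z * theta10 (2*τ) z := by
    rw [hth01, hth00, hth10b]
    exact hA
  have key2 : theta10 τ z * (∑' n : ℤ, cexp ((4*(n:ℂ)^2+4*(n:ℂ)+1)*α))
      = 2 * (theta00 (2*τ) z * theta10 (2*τ) z) := by
    rw [hth10, hth00, hth10b]
    exact hB
  have ht10ne : (∑' n : ℤ, cexp ((4*(n:ℂ)^2+4*(n:ℂ)+1)*α)) ≠ 0 := by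
    rw [ht10]
    exact mul_ne_zero (Complex.exp_ne_zero _)
      (mul_ne_zero two_ne_zero (Complex.exp_ne_zero _))
  have merge : ∀ (u v : ℂ), (2:ℂ) * cexp u * (cexp v * cexp v) = 2 * cexp (u + v + v) := by
    intro u v
    rw [← Complex.exp_add, mul_assoc, ← Complex.exp_add, ← add_assoc]
  have mergeR : ∀ (u w v : ℂ), cexp u * (2 * cexp w) * (cexp v * cexp v)
      = 2 * cexp (u + w + v + v) := by
    intro u w v
    rw [← Complex.exp_add,
      show ∀ (y : ℂ), cexp u * (2*cexp w) * y = 2 * (cexp u * cexp w * y) from fun y => by ring,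
      ← Complex.exp_add, ← Complex.exp_add,
      show u + w + (v + v) = u + w + v + v by ring]
  have key3 : 2 * (∑' n : ℤ, (-1:ℂ)^n * cexp (4*(n:ℂ)^2*α)) * (dedekindEta (2*τ))^2
      = (∑' n : ℤ, cexp ((4*(n:ℂ)^2+4*(n:ℂ)+1)*α)) * (dedekindEta (τ/2))^2 := by
    rw [ht01, ht10, hE1, hE2, sq, sq, merge, mergeR]
    congr 2
    linear_combination (2:ℂ) * hDsplit + 2 * hAsplit - hαdef
  -- final algebra
  rw [div_sub_div _ _ h1 h2, div_mul_div_comm,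
    div_eq_div_iff (mul_ne_zero h1 h2) (mul_ne_zero (pow_ne_zero 2 hE2ne) h3),
    ← key1]
  apply mul_right_cancel₀ ht10ne
  linear_combination (theta01 τ z * (∑' n : ℤ, (-1:ℂ)^n * cexp (4*(n:ℂ)^2*α))
      * (dedekindEta (2*τ))^2) * key2
    + (theta01 τ z * theta00 (2*τ) z * theta10 (2*τ) z) * key3


end
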